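/- The T/I group acting on the set of 24 major and minor triads acts simply transitively: for any two triads X, Y there is exactly one element of the T/I group mapping X to Y. The same holds for the PLR group, and the two groups are each other's centralizers in the symmetric group on the 24 triads. -/
import Mathlib


/-- A triad is given by its root and its quality: `(r, false)` is the major
triad {r, r+4, r+7}, `(r, true)` is the minor triad {r, r+3, r+7}.
There are 24 such triads. -/
abbrev Triad : Type := ZMod 12 × Bool

/-- Transposition Tₙ acting on triads (pointwise x ↦ x + n on pitch classes). -/
def Tperm (n : ZMod 12) : Equiv.Perm Triad :=
  (Equiv.addRight n).prodCongr (Equiv.refl Bool)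

/-- Inversion Iₙ (pointwise x ↦ -x + n): sends the major triad on r to the
minor triad on n + 5 - r, and conversely. -/
def Iperm (n : ZMod 12) : Equiv.Perm Triad :=
  Function.Involutive.toPerm (fun p => (n + 5 - p.1, !p.2))
    (by intro p; cases p; simp [Bool.not_not])

/-- Parallel: exchanges the major and minor triads on the same root. -/
def Pperm : Equiv.Perm Triad :=
  Function.Involutive.toPerm (fun p => (p.1, !p.2))
    (by intro p; simp)

/-- Leittonwechsel: major on r ↦ minor on r + 4 (e.g. C major ↦ e minor). -/
def Lperm : Equiv.Perm Triad :=
  Function.Involutive.toPerm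
    (fun p => (if p.2 then p.1 - 4 else p.1 + 4, !p.2))
    (by intro p; obtain ⟨r, q⟩ := p; cases q <;> simp)

/-- Relative: major on r ↦ minor on r + 9 (e.g. C major ↦ a minor). -/
def Rperm : Equiv.Perm Triad :=
  Function.Involutive.toPerm
    (fun p => (if p.2 then p.1 + 3 else p.1 + 9, !p.2))
    (by
      have h : (12 : ZMod 12) = 0 := by decide
      intro p; obtain ⟨r, q⟩ := p; cases q <;> simp <;> linear_combination h)

/-- The T/I group as a subgroup of the symmetric group on the 24 triads. -/
def TIgroup : Subgroup (Equiv.Perm Triad) :=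
  Subgroup.closure ((Set.range Tperm) ∪ (Set.range Iperm))

/-- The PLR group. -/
def PLRgroup : Subgroup (Equiv.Perm Triad) :=
  Subgroup.closure {Pperm, Lperm, Rperm}

/-! ### Auxiliary machinery -/

/-- Wechsel Wₙ : major on r ↦ minor on r + n, minor on r ↦ major on r - n. -/
def Wperm (n : ZMod 12) : Equiv.Perm Triad :=
  Function.Involutive.toPerm
    (fun p => (if p.2 then p.1 - n else p.1 + n, !p.2))
    (by intro p; obtain ⟨r, q⟩ := p; cases q <;> simp)

/-- Schritt Qₙ : major on r ↦ major on r + n, minor on r ↦ minor on r - n. -/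
def Qperm (n : ZMod 12) : Equiv.Perm Triad := Pperm * Wperm n

-- multiplication table for the T/I family
lemma tt_mul : ∀ a b : ZMod 12, Tperm a * Tperm b = Tperm (a + b) := by decide
lemma ti_mul : ∀ a b : ZMod 12, Tperm a * Iperm b = Iperm (a + b) := by decide
lemma it_mul : ∀ a b : ZMod 12, Iperm a * Tperm b = Iperm (a - b) := by decide
lemma ii_mul : ∀ a b : ZMod 12, Iperm a * Iperm b = Tperm (a - b) := by decide
lemma t_inv : ∀ a : ZMod 12, (Tperm a)⁻¹ = Tperm (-a) := by decide
lemma i_inv : ∀ a : ZMod 12, (Iperm a)⁻¹ = Iperm a := by decide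
lemma t_zero : Tperm 0 = 1 := by decide

-- multiplication table for the PLR family
lemma qq_mul : ∀ a b : ZMod 12, Qperm a * Qperm b = Qperm (a + b) := by decide
lemma qw_mul : ∀ a b : ZMod 12, Qperm a * Wperm b = Wperm (b - a) := by decide
lemma wq_mul : ∀ a b : ZMod 12, Wperm a * Qperm b = Wperm (a + b) := by decide
lemma ww_mul : ∀ a b : ZMod 12, Wperm a * Wperm b = Qperm (b - a) := by decide
lemma q_inv : ∀ a : ZMod 12, (Qperm a)⁻¹ = Qperm (-a) := by decide
lemma w_inv : ∀ a : ZMod 12, (Wperm a)⁻¹ = Wperm a := by decide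
lemma q_zero : Qperm 0 = 1 := by decide

lemma P_eq : Pperm = Wperm 0 := by decide
lemma L_eq : Lperm = Wperm 4 := by decide
lemma R_eq : Rperm = Wperm 9 := by decide
lemma LR_eq : Lperm * Rperm = Qperm 5 := by decide
lemma Q5_pow : (Qperm 5) ^ 5 = Qperm 1 := by decide

-- commutation
lemma comm_tq : ∀ a b : ZMod 12, Tperm a * Qperm b = Qperm b * Tperm a := by decide
lemma comm_tw : ∀ a b : ZMod 12, Tperm a * Wperm b = Wperm b * Tperm a := by decide
lemma comm_iq : ∀ a b : ZMod 12, Iperm a * Qperm b = Qperm b * Iperm a := by decide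
lemma comm_iw : ∀ a b : ZMod 12, Iperm a * Wperm b = Wperm b * Iperm a := by decide

-- transitivity and freeness, decided pointwise
lemma TI_trans : ∀ X Y : Triad, ∃ n : ZMod 12, Tperm n X = Y ∨ Iperm n X = Y := by decide
lemma PLR_trans : ∀ X Y : Triad, ∃ n : ZMod 12, Qperm n X = Y ∨ Wperm n X = Y := by decide
lemma t_free : ∀ (a b : ZMod 12) (X : Triad), Tperm a X = Tperm b X → Tperm a = Tperm b := by decide
lemma i_free : ∀ (a b : ZMod 12) (X : Triad), Iperm a X = Iperm b X → Iperm a = Iperm b := by decide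
lemma ti_ne : ∀ (a b : ZMod 12) (X : Triad), Tperm a X ≠ Iperm b X := by decide
lemma q_free : ∀ (a b : ZMod 12) (X : Triad), Qperm a X = Qperm b X → Qperm a = Qperm b := by decide
lemma w_free : ∀ (a b : ZMod 12) (X : Triad), Wperm a X = Wperm b X → Wperm a = Wperm b := by decide
lemma qw_ne : ∀ (a b : ZMod 12) (X : Triad), Qperm a X ≠ Wperm b X := by decide

-- base point evaluations
lemma t_base : ∀ x : ZMod 12, Tperm x (0, false) = (x, false) := by decide
lemma i_base : ∀ x : ZMod 12, Iperm (x - 5) (0, false) = (x, true) := by decide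
lemma q_base : ∀ x : ZMod 12, Qperm x (0, false) = (x, false) := by decide
lemma w_base : ∀ x : ZMod 12, Wperm x (0, false) = (x, true) := by decide

/-- The T/I group, concretely. -/
def TIsub : Subgroup (Equiv.Perm Triad) where
  carrier := Set.range Tperm ∪ Set.range Iperm
  one_mem' := Or.inl ⟨0, t_zero⟩
  mul_mem' := by
    rintro a b (⟨m, rfl⟩ | ⟨m, rfl⟩) (⟨n, rfl⟩ | ⟨n, rfl⟩)
    · exact Or.inl ⟨m + n, (tt_mul m n).symm⟩
    · exact Or.inr ⟨m + n, (ti_mul m n).symm⟩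
    · exact Or.inr ⟨m - n, (it_mul m n).symm⟩
    · exact Or.inl ⟨m - n, (ii_mul m n).symm⟩
  inv_mem' := by
    rintro a (⟨n, rfl⟩ | ⟨n, rfl⟩)
    · exact Or.inl ⟨-n, (t_inv n).symm⟩
    · exact Or.inr ⟨n, (i_inv n).symm⟩

/-- The PLR group, concretely. -/
def PLRsub : Subgroup (Equiv.Perm Triad) where
  carrier := Set.range Qperm ∪ Set.range Wperm
  one_mem' := Or.inl ⟨0, q_zero⟩
  mul_mem' := by
    rintro a b (⟨m, rfl⟩ | ⟨m, rfl⟩) (⟨n, rfl⟩ | ⟨n, rfl⟩)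
    · exact Or.inl ⟨m + n, (qq_mul m n).symm⟩
    · exact Or.inr ⟨n - m, (qw_mul m n).symm⟩
    · exact Or.inr ⟨m + n, (wq_mul m n).symm⟩
    · exact Or.inl ⟨n - m, (ww_mul m n).symm⟩
  inv_mem' := by
    rintro a (⟨n, rfl⟩ | ⟨n, rfl⟩)
    · exact Or.inl ⟨-n, (q_inv n).symm⟩
    · exact Or.inr ⟨n, (w_inv n).symm⟩

lemma TI_eq : TIgroup = TIsub := Subgroup.closure_eq TIsub

lemma t_mem (n : ZMod 12) : Tperm n ∈ TIgroup :=
  Subgroup.subset_closure (Or.inl ⟨n, rfl⟩)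

lemma i_mem (n : ZMod 12) : Iperm n ∈ TIgroup :=
  Subgroup.subset_closure (Or.inr ⟨n, rfl⟩)

lemma q_mem (n : ZMod 12) : Qperm n ∈ PLRgroup := by
  have h1 : Qperm 1 ∈ PLRgroup := by
    rw [← Q5_pow, ← LR_eq]
    exact pow_mem (mul_mem (Subgroup.subset_closure (by simp))
      (Subgroup.subset_closure (by simp))) 5
  have hpow : ∀ k : ℕ, Qperm (k : ZMod 12) ∈ PLRgroup := by
    intro k
    induction k with
    | zero => simpa [q_zero] using one_mem PLRgroup
    | succ k ih =>
        have : Qperm ((k : ZMod 12) + 1) ∈ PLRgroup := by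
          rw [← qq_mul]; exact mul_mem ih h1
        simpa [Nat.cast_succ] using this
  have := hpow n.val
  rwa [ZMod.natCast_val, ZMod.cast_id] at this

lemma w_mem (n : ZMod 12) : Wperm n ∈ PLRgroup := by
  have : Wperm 0 * Qperm n = Wperm n := by rw [wq_mul, zero_add]
  rw [← this, ← P_eq]
  exact mul_mem (Subgroup.subset_closure (by simp)) (q_mem n)

lemma PLR_eq : PLRgroup = PLRsub := by
  apply le_antisymm
  · rw [PLRgroup, Subgroup.closure_le]
    rintro g hg
    rcases hg with rfl | rfl | rfl
    · exact Or.inr ⟨0, P_eq.symm⟩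
    · exact Or.inr ⟨4, L_eq.symm⟩
    · exact Or.inr ⟨9, R_eq.symm⟩
  · rintro g (⟨n, rfl⟩ | ⟨n, rfl⟩)
    · exact q_mem n
    · exact w_mem n

lemma TI_unique {g₁ g₂ : Equiv.Perm Triad} (h₁ : g₁ ∈ TIgroup) (h₂ : g₂ ∈ TIgroup)
    (X : Triad) (h : g₁ X = g₂ X) : g₁ = g₂ := by
  rw [TI_eq] at h₁ h₂
  rcases h₁ with ⟨m, rfl⟩ | ⟨m, rfl⟩ <;> rcases h₂ with ⟨n, rfl⟩ | ⟨n, rfl⟩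
  · exact t_free m n X h
  · exact absurd h (ti_ne m n X)
  · exact absurd h.symm (ti_ne n m X)
  · exact i_free m n X h

lemma PLR_unique {g₁ g₂ : Equiv.Perm Triad} (h₁ : g₁ ∈ PLRgroup) (h₂ : g₂ ∈ PLRgroup)
    (X : Triad) (h : g₁ X = g₂ X) : g₁ = g₂ := by
  rw [PLR_eq] at h₁ h₂
  rcases h₁ with ⟨m, rfl⟩ | ⟨m, rfl⟩ <;> rcases h₂ with ⟨n, rfl⟩ | ⟨n, rfl⟩
  · exact q_free m n X h
  · exact absurd h (qw_ne m n X)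
  · exact absurd h.symm (qw_ne n m X)
  · exact w_free m n X h

lemma PLR_le_cent : PLRgroup ≤ Subgroup.centralizer (TIgroup : Set (Equiv.Perm Triad)) := by
  intro h hh
  rw [Subgroup.mem_centralizer_iff]
  intro g hg
  rw [SetLike.mem_coe, TI_eq] at hg
  rw [PLR_eq] at hh
  rcases hg with ⟨m, rfl⟩ | ⟨m, rfl⟩ <;> rcases hh with ⟨n, rfl⟩ | ⟨n, rfl⟩
  · exact comm_tq m n
  · exact comm_tw m n
  · exact comm_iq m n
  · exact comm_iw m n

lemma TI_le_cent : TIgroup ≤ Subgroup.centralizer (PLRgroup : Set (Equiv.Perm Triad)) := by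
  intro g hg
  rw [Subgroup.mem_centralizer_iff]
  intro h hh
  rw [SetLike.mem_coe, PLR_eq] at hh
  rw [TI_eq] at hg
  rcases hh with ⟨m, rfl⟩ | ⟨m, rfl⟩ <;> rcases hg with ⟨n, rfl⟩ | ⟨n, rfl⟩
  · exact (comm_tq n m).symm
  · exact (comm_iq n m).symm
  · exact (comm_tw n m).symm
  · exact (comm_iw n m).symm

/-- The T/I and PLR groups each act simply transitively on the 24 triads, and
they are each other's centralizers in the symmetric group on the triads. -/
theorem TI_PLR_duality :
    (∀ X Y : Triad, ∃! g : TIgroup, (g : Equiv.Perm Triad) X = Y) ∧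
    (∀ X Y : Triad, ∃! g : PLRgroup, (g : Equiv.Perm Triad) X = Y) ∧
    Subgroup.centralizer (TIgroup : Set (Equiv.Perm Triad)) = PLRgroup ∧
    Subgroup.centralizer (PLRgroup : Set (Equiv.Perm Triad)) = TIgroup := by
  refine ⟨?_, ?_, ?_, ?_⟩
  · -- T/I simply transitive
    intro X Y
    obtain ⟨n, hn | hn⟩ := TI_trans X Y
    · refine ⟨⟨Tperm n, t_mem n⟩, hn, ?_⟩
      rintro ⟨g, hg⟩ hgX
      exact Subtype.ext (TI_unique hg (t_mem n) X (hgX.trans hn.symm))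
    · refine ⟨⟨Iperm n, i_mem n⟩, hn, ?_⟩
      rintro ⟨g, hg⟩ hgX
      exact Subtype.ext (TI_unique hg (i_mem n) X (hgX.trans hn.symm))
  · -- PLR simply transitive
    intro X Y
    obtain ⟨n, hn | hn⟩ := PLR_trans X Y
    · refine ⟨⟨Qperm n, q_mem n⟩, hn, ?_⟩
      rintro ⟨g, hg⟩ hgX
      exact Subtype.ext (PLR_unique hg (q_mem n) X (hgX.trans hn.symm))
    · refine ⟨⟨Wperm n, w_mem n⟩, hn, ?_⟩
      rintro ⟨g, hg⟩ hgX
      exact Subtype.ext (PLR_unique hg (w_mem n) X (hgX.trans hn.symm))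
  · -- centralizer of T/I is PLR
    apply le_antisymm _ PLR_le_cent
    intro g hg
    have hcomm : ∀ t ∈ TIgroup, ∀ p : Triad, g (t p) = t (g p) := by
      intro t ht p
      have h := Subgroup.mem_centralizer_iff.mp hg t (SetLike.mem_coe.mpr ht)
      calc g (t p) = (g * t) p := rfl
        _ = (t * g) p := by rw [h]
        _ = t (g p) := rfl
    rcases hb : g (0, false) with ⟨a, b⟩
    set h : Equiv.Perm Triad := if b then Wperm a else Qperm a with hdef
    have hmem : h ∈ PLRgroup := by
      cases b <;> simp only [hdef, if_true, if_false]
      · exact q_mem a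
      · exact w_mem a
    have hbase : h (0, false) = (a, b) := by
      cases b <;> simp only [hdef, if_true, if_false]
      · exact q_base a
      · exact w_base a
    have hcomm' : ∀ t ∈ TIgroup, ∀ p : Triad, h (t p) = t (h p) := by
      intro t ht p
      have hc := Subgroup.mem_centralizer_iff.mp (PLR_le_cent hmem) t (SetLike.mem_coe.mpr ht)
      calc h (t p) = (h * t) p := rfl
        _ = (t * h) p := by rw [hc]
        _ = t (h p) := rfl
    have : g = h := by
      apply Equiv.ext
      rintro ⟨x, u⟩
      obtain ⟨t, ht, htb⟩ : ∃ t ∈ TIgroup, t (0, false) = ((x, u) : Triad) := by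
        cases u
        · exact ⟨Tperm x, t_mem x, t_base x⟩
        · exact ⟨Iperm (x - 5), i_mem (x - 5), i_base x⟩
      calc g (x, u) = g (t (0, false)) := by rw [htb]
        _ = t (g (0, false)) := hcomm t ht _
        _ = t (a, b) := by rw [hb]
        _ = t (h (0, false)) := by rw [hbase]
        _ = h (t (0, false)) := (hcomm' t ht _).symm
        _ = h (x, u) := by rw [htb]
    rw [this]; exact hmem
  · -- centralizer of PLR is T/I
    apply le_antisymm _ TI_le_cent
    intro g hg
    have hcomm : ∀ t ∈ PLRgroup, ∀ p : Triad, g (t p) = t (g p) := by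
      intro t ht p
      have h := Subgroup.mem_centralizer_iff.mp hg t (SetLike.mem_coe.mpr ht)
      calc g (t p) = (g * t) p := rfl
        _ = (t * g) p := by rw [h]
        _ = t (g p) := rfl
    rcases hb : g (0, false) with ⟨a, b⟩
    set h : Equiv.Perm Triad := if b then Iperm (a - 5) else Tperm a with hdef
    have hmem : h ∈ TIgroup := by
      cases b <;> simp only [hdef, if_true, if_false]
      · exact t_mem a
      · exact i_mem (a - 5)
    have hbase : h (0, false) = (a, b) := by
      cases b <;> simp only [hdef, if_true, if_false]
      · exact t_base a
      · exact i_base a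
    have hcomm' : ∀ t ∈ PLRgroup, ∀ p : Triad, h (t p) = t (h p) := by
      intro t ht p
      have hc := Subgroup.mem_centralizer_iff.mp (TI_le_cent hmem) t (SetLike.mem_coe.mpr ht)
      calc h (t p) = (h * t) p := rfl
        _ = (t * h) p := by rw [hc]
        _ = t (h p) := rfl
    have : g = h := by
      apply Equiv.ext
      rintro ⟨x, u⟩
      obtain ⟨t, ht, htb⟩ : ∃ t ∈ PLRgroup, t (0, false) = ((x, u) : Triad) := by
        cases u
        · exact ⟨Qperm x, q_mem x, q_base x⟩
        · exact ⟨Wperm x, w_mem x, w_base x⟩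
      calc g (x, u) = g (t (0, false)) := by rw [htb]
        _ = t (g (0, false)) := hcomm t ht _
        _ = t (a, b) := by rw [hb]
        _ = t (h (0, false)) := by rw [hbase]
        _ = h (t (0, false)) := (hcomm' t ht _).symm
        _ = h (x, u) := by rw [htb]
    rw [this]; exact hmem
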